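/- Let F be a field and 𝒜 the 7-dimensional F-subalgebra of M_7(F) consisting of matrices A(α,a,b,c,d,e,f) with diagonal α, first row (α,a,b,c,d,e,f), and additional nonzero entries A[2,4]=b, A[2,7]=d, A[3,7]=e, A[5,7]=a, A[6,7]=b. Then the center Z(𝒜) consists exactly of those matrices with a = b = 0, i.e., matrices of the form A(α,0,0,c,d,e,f). -/
import Mathlib


/-- The generic element of the 7-dimensional subalgebra `𝒜` of `M₇(F)` from the paper:
diagonal `α`, first row `(α, a, b, c, d, e, f)`, and additional entries
`A[2,4] = b`, `A[2,7] = d`, `A[3,7] = e`, `A[5,7] = a`, `A[6,7] = b`. -/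
def mat (F : Type*) [Field F] (α a b c d e f : F) : Matrix (Fin 7) (Fin 7) F :=
  !![α, a, b, c, d, e, f;
     0, α, 0, b, 0, 0, d;
     0, 0, α, 0, 0, 0, e;
     0, 0, 0, α, 0, 0, 0;
     0, 0, 0, 0, α, 0, a;
     0, 0, 0, 0, 0, α, b;
     0, 0, 0, 0, 0, 0, α]

/-- The underlying set of the algebra `𝒜`. -/
def ASet (F : Type*) [Field F] : Set (Matrix (Fin 7) (Fin 7) F) :=
  {M | ∃ α a b c d e f : F, M = mat F α a b c d e f}


@[simp]
lemma cons_val_five {α : Type*} {m : ℕ} (x : α) (u : Fin (m + 5) → α) :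
    Matrix.vecCons x u 5 = Matrix.vecHead (Matrix.vecTail (Matrix.vecTail (Matrix.vecTail (Matrix.vecTail u)))) :=
  rfl

@[simp]
lemma cons_val_six {α : Type*} {m : ℕ} (x : α) (u : Fin (m + 6) → α) :
    Matrix.vecCons x u 6 = Matrix.vecHead (Matrix.vecTail (Matrix.vecTail (Matrix.vecTail (Matrix.vecTail (Matrix.vecTail u))))) :=
  rfl

set_option maxHeartbeats 2000000 in
lemma mat_mul (F : Type*) [Field F] (α a b c d e f α' a' b' c' d' e' f' : F) :
    mat F α a b c d e f * mat F α' a' b' c' d' e' f' =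
      mat F (α*α') (α*a'+a*α') (α*b'+b*α') (α*c'+a*b'+c*α')
        (α*d'+d*α') (α*e'+e*α') (α*f'+a*d'+b*e'+d*a'+e*b'+f*α') := by
  ext i j
  fin_cases i <;> fin_cases j <;>
    simp [mat, Matrix.mul_apply, Fin.sum_univ_succ, Matrix.vecHead, Matrix.vecTail] <;> ring

/-- The center of `𝒜` consists exactly of the matrices `mat α 0 0 c d e f`,
i.e. those with `a = b = 0`. -/
theorem stmt_13 (F : Type*) [Field F] :
    ∀ M ∈ ASet F, ((∀ N ∈ ASet F, M * N = N * M) ↔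
      ∃ α c d e f : F, M = mat F α 0 0 c d e f) := by
  rintro M ⟨α, a, b, c, d, e, f, rfl⟩
  constructor
  · intro h
    have h1 := h (mat F 0 0 1 0 0 0 0) ⟨0, 0, 1, 0, 0, 0, 0, rfl⟩
    have h2 := h (mat F 0 1 0 0 0 0 0) ⟨0, 1, 0, 0, 0, 0, 0, rfl⟩
    rw [mat_mul, mat_mul] at h1 h2
    have ha : a = 0 := by
      have := congrFun (congrFun h1 0) 3
      simpa [mat] using this
    have hb : b = 0 := by
      have := congrFun (congrFun h2 0) 3
      simpa [mat] using this.symm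
    exact ⟨α, c, d, e, f, by rw [ha, hb]⟩
  · rintro ⟨α', c', d', e', f', hM⟩ N ⟨β, a', b', c'', d'', e'', f'', rfl⟩
    rw [hM, mat_mul, mat_mul]
    congr 1 <;> ring
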